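/- For every fixed z > 0, the sequence of consecutive-generation ratios satisfies γ_k(z) · B · (k − n/2 + 1)/(k + 1) → 1 as k → ∞; that is, γ_k(z) ∼ (1/B)·(1 + n/(2ν)) with ν = k − n/2 + 1 as the generation number k grows. In particular γ_k(z) → 1/B, so at any fixed spatial point the rank distribution is asymptotically exponential with index B for small ranks. -/

import Mathlib

open Real MeasureTheory Set Filter Topology

namespace GenRatioAux



noncomputable def G (lam a : ℝ) : ℝ := ∫ s in Ioi (0:ℝ), s ^ a * Real.exp (-lam * s)
noncomputable def J (lam c a : ℝ) : ℝ := ∫ s in Ioi (0:ℝ), s ^ a * Real.exp (-lam * s - c / s)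

variable {lam c : ℝ}

lemma intG (hlam : 0 < lam) {a : ℝ} (ha : (0:ℝ) ≤ a) :
    IntegrableOn (fun s : ℝ => s ^ a * Real.exp (-lam * s)) (Ioi 0) := by
  have h := integrableOn_rpow_mul_exp_neg_mul_rpow (p := 1) (s := a) (b := lam)
    (by linarith) one_pos hlam
  simpa [Real.rpow_one] using h

lemma contJ (lam c a : ℝ) :
    ContinuousOn (fun s : ℝ => s ^ a * Real.exp (-lam * s - c / s)) (Ioi 0) := by
  intro s hs
  have hs0 : s ≠ 0 := ne_of_gt hs
  have h1 : ContinuousAt (fun s : ℝ => s ^ a) s :=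
    Real.continuousAt_rpow_const s a (Or.inl hs0)
  have h2 : ContinuousAt (fun s : ℝ => Real.exp (-lam * s - c / s)) s := by
    apply Real.continuous_exp.continuousAt.comp
    exact ((continuous_const.mul continuous_id).continuousAt).sub
      (continuousAt_const.div continuousAt_id hs0)
  exact (h1.mul h2).continuousWithinAt

lemma intJ (hlam : 0 < lam) (hc : 0 ≤ c) {a : ℝ} (ha : 0 ≤ a) :
    IntegrableOn (fun s : ℝ => s ^ a * Real.exp (-lam * s - c / s)) (Ioi 0) := by
  refine (intG hlam ha).mono' ((contJ lam c a).aestronglyMeasurable measurableSet_Ioi) ?_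
  refine (ae_restrict_iff' measurableSet_Ioi).2 (Eventually.of_forall fun s hs => ?_)
  have hs0 : (0:ℝ) < s := hs
  have h1 : 0 ≤ s ^ a := Real.rpow_nonneg hs0.le a
  have h2 : Real.exp (-lam * s - c / s) ≤ Real.exp (-lam * s) :=
    Real.exp_le_exp.2 (by have : 0 ≤ c / s := div_nonneg hc hs0.le; linarith)
  rw [Real.norm_eq_abs, abs_of_nonneg (by positivity)]
  exact mul_le_mul_of_nonneg_left h2 h1

lemma posJ (hlam : 0 < lam) (hc : 0 ≤ c) {a : ℝ} (ha : 0 ≤ a) : 0 < J lam c a := by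
  rw [J, setIntegral_pos_iff_support_of_nonneg_ae
    ((ae_restrict_iff' measurableSet_Ioi).2 (Eventually.of_forall fun s hs =>
      mul_nonneg (Real.rpow_nonneg (le_of_lt hs) a) (Real.exp_pos _).le))
    (intJ hlam hc ha)]
  have hsub : Ioi (0:ℝ) ⊆
      (Function.support fun s : ℝ => s ^ a * Real.exp (-lam * s - c / s)) ∩ Ioi 0 := by
    intro s hs
    exact ⟨ne_of_gt (mul_pos (Real.rpow_pos_of_pos hs a) (Real.exp_pos _)), hs⟩
  calc (0 : ENNReal) < volume (Ioi (0:ℝ)) := by simp [Real.volume_Ioi]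
  _ ≤ _ := measure_mono hsub

lemma G_eq_J (lam a : ℝ) : G lam a = J lam 0 a := by
  unfold G J
  refine setIntegral_congr_fun measurableSet_Ioi fun s hs => ?_
  simp

lemma posG (hlam : 0 < lam) {a : ℝ} (ha : 0 ≤ a) : 0 < G lam a := by
  rw [G_eq_J]; exact posJ hlam le_rfl ha

lemma G_val (hlam : 0 < lam) {a : ℝ} (ha : (-1:ℝ) < a) :
    G lam a = lam ^ (-(a + 1)) * Real.Gamma (a + 1) := by
  have h := integral_rpow_mul_exp_neg_mul_rpow (p := 1) (q := a) (b := lam) one_pos ha hlam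
  simpa [Real.rpow_one, G] using h

lemma G_rec (hlam : 0 < lam) {a : ℝ} (ha : 0 ≤ a) :
    lam * G lam (a + 1) = (a + 1) * G lam a := by
  rw [G_val hlam (by linarith), G_val hlam (by linarith : (-1:ℝ) < a),
    Real.Gamma_add_one (by positivity : a + 1 ≠ 0),
    show (-(a + 1 + 1)) = (-(a + 1)) + (-1) by ring, Real.rpow_add hlam, Real.rpow_neg_one]
  field_simp

lemma J_le_G (hlam : 0 < lam) (hc : 0 ≤ c) {a : ℝ} (ha : 0 ≤ a) : J lam c a ≤ G lam a := by
  refine setIntegral_mono_on (intJ hlam hc ha) (intG hlam ha) measurableSet_Ioi fun s hs => ?_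
  have h1 : 0 ≤ s ^ a := Real.rpow_nonneg (le_of_lt hs) a
  have h2 : Real.exp (-lam * s - c / s) ≤ Real.exp (-lam * s) :=
    Real.exp_le_exp.2 (by have : 0 ≤ c / s := div_nonneg hc (le_of_lt hs); linarith)
  exact mul_le_mul_of_nonneg_left h2 h1

lemma JG_lower (hlam : 0 < lam) (hc : 0 ≤ c) {M a : ℝ} (hM : 1 ≤ M) (ha : 0 ≤ a) :
    (Real.exp (-(c / M)) - M * Real.exp (lam * (2 * M + 1)) * (1 / 2 : ℝ) ^ a) * G lam a
      ≤ J lam c a := by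
  have hM0 : (0:ℝ) < M := lt_of_lt_of_le one_pos hM
  set g : ℝ → ℝ := fun s => s ^ a * Real.exp (-lam * s) with hgdef
  set A : ℝ := ∫ s in Ioc (0:ℝ) M, g s with hAdef
  -- split G
  have hGsplit : G lam a = A + ∫ s in Ioi M, g s := by
    rw [G, hAdef, ← setIntegral_union (Ioc_disjoint_Ioi le_rfl) measurableSet_Ioi
      ((intG hlam ha).mono_set Ioc_subset_Ioi_self)
      ((intG hlam ha).mono_set (Ioi_subset_Ioi hM0.le)),
      Ioc_union_Ioi_eq_Ioi hM0.le]
  -- A is nonneg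
  have hA0 : 0 ≤ A := setIntegral_nonneg measurableSet_Ioc fun s hs =>
    mul_nonneg (Real.rpow_nonneg hs.1.le a) (Real.exp_pos _).le
  -- A ≤ M^(a+1)
  have hAle : A ≤ M ^ (a + 1) := by
    have hb := norm_setIntegral_le_of_norm_le_const (μ := volume) (s := Ioc (0:ℝ) M)
      (f := g) (C := M ^ a) (by rw [Real.volume_Ioc]; exact ENNReal.ofReal_lt_top)
      ?_
    · calc A ≤ ‖A‖ := le_abs_self _
      _ ≤ M ^ a * (volume (Ioc (0:ℝ) M)).toReal := hb
      _ = M ^ (a + 1) := by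
          rw [Real.volume_Ioc, ENNReal.toReal_ofReal (by linarith), sub_zero,
            Real.rpow_add_one (ne_of_gt hM0)]
    · intro x hx
      have hx0 : 0 ≤ x := hx.1.le
      have h1 : x ^ a ≤ M ^ a := Real.rpow_le_rpow hx0 hx.2 ha
      have h2 : Real.exp (-lam * x) ≤ 1 := Real.exp_le_one_iff.2 (by nlinarith [hx.1])
      rw [Real.norm_eq_abs, abs_of_nonneg (mul_nonneg (Real.rpow_nonneg hx0 a) (Real.exp_pos _).le)]
      calc x ^ a * Real.exp (-lam * x) ≤ x ^ a * 1 :=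
            mul_le_mul_of_nonneg_left h2 (Real.rpow_nonneg hx0 a)
      _ ≤ M ^ a := by rw [mul_one]; exact h1
  -- lower bound on G
  have h2M : (0:ℝ) < 2 * M := by linarith
  have hsub2 : Ioc (2*M) (2*M+1) ⊆ Ioi (0:ℝ) := fun x hx => lt_trans h2M hx.1
  have hG2 : (2*M) ^ a * Real.exp (-(lam * (2*M+1))) ≤ G lam a := by
    have hμ : volume (Ioc (2*M) (2*M+1)) ≠ ⊤ := measure_Ioc_lt_top.ne
    have hlow := setIntegral_ge_of_const_le (μ := volume) (s := Ioc (2*M) (2*M+1))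
      (f := g) (c := (2*M) ^ a * Real.exp (-(lam * (2*M+1)))) measurableSet_Ioc hμ
      (fun x hx => ?_) ((intG hlam ha).mono_set hsub2)
    · have hμ1 : (volume (Ioc (2*M) (2*M+1))).toReal = 1 := by
        rw [Real.volume_Ioc, ENNReal.toReal_ofReal (by linarith)]; ring
      rw [measureReal_def, hμ1, one_smul] at hlow
      refine le_trans hlow ?_
      rw [G]
      exact setIntegral_mono_set (intG hlam ha)
        ((ae_restrict_iff' measurableSet_Ioi).2 (Eventually.of_forall fun s hs =>
          mul_nonneg (Real.rpow_nonneg (le_of_lt hs) a) (Real.exp_pos _).le))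
        (HasSubset.Subset.eventuallyLE hsub2)
    · have h1 : (2*M) ^ a ≤ x ^ a := Real.rpow_le_rpow h2M.le hx.1.le ha
      have h2 : Real.exp (-(lam * (2*M+1))) ≤ Real.exp (-lam * x) := by
        apply Real.exp_le_exp.2
        have := hx.2
        nlinarith
      exact mul_le_mul h1 h2 (Real.exp_pos _).le (Real.rpow_nonneg (le_of_lt (lt_trans h2M hx.1)) a)
  -- J lower via tail
  have hJtail : Real.exp (-(c/M)) * ∫ s in Ioi M, g s ≤ J lam c a := by
    have hstep1 : ∫ s in Ioi M, Real.exp (-(c/M)) * g s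
        ≤ ∫ s in Ioi M, s ^ a * Real.exp (-lam * s - c / s) := by
      refine setIntegral_mono_on
        (((intG hlam ha).mono_set (Ioi_subset_Ioi hM0.le)).const_mul _)
        ((intJ hlam hc ha).mono_set (Ioi_subset_Ioi hM0.le)) measurableSet_Ioi
        fun s hs => ?_
      have hMs : M ≤ s := le_of_lt hs
      have hs0 : (0:ℝ) < s := lt_of_lt_of_le hM0 hMs
      have hcs : c / s ≤ c / M := by gcongr
      have hrw : Real.exp (-(c/M)) * g s = s ^ a * Real.exp (-lam * s - c / M) := by
        simp only [hgdef]
        rw [show -lam * s - c / M = (-(c/M)) + (-lam * s) by ring, Real.exp_add]; ring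
      rw [hrw]
      exact mul_le_mul_of_nonneg_left (Real.exp_le_exp.2 (by linarith))
        (Real.rpow_nonneg hs0.le a)
    have hstep2 : ∫ s in Ioi M, s ^ a * Real.exp (-lam * s - c / s) ≤ J lam c a := by
      rw [J]
      refine setIntegral_mono_set (intJ hlam hc ha) ?_
        (HasSubset.Subset.eventuallyLE (Ioi_subset_Ioi hM0.le))
      refine (ae_restrict_iff' measurableSet_Ioi).2 (Eventually.of_forall fun s hs => ?_)
      exact mul_nonneg (Real.rpow_nonneg (le_of_lt hs) a) (Real.exp_pos _).le
    calc Real.exp (-(c/M)) * ∫ s in Ioi M, g s = ∫ s in Ioi M, Real.exp (-(c/M)) * g s := by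
          rw [MeasureTheory.integral_const_mul]
    _ ≤ _ := le_trans hstep1 hstep2
  -- combine
  set E : ℝ := Real.exp (-(c/M)) with hEdef
  set S : ℝ := M * Real.exp (lam * (2 * M + 1)) * (1 / 2 : ℝ) ^ a with hSdef
  have hS0 : 0 ≤ S := by
    rw [hSdef]
    have : (0:ℝ) ≤ (1/2:ℝ) ^ a := Real.rpow_nonneg (by norm_num) a
    positivity
  have hE1 : E ≤ 1 := Real.exp_le_one_iff.2 (neg_nonpos.2 (div_nonneg hc hM0.le))
  have hid : M ^ (a+1) = S * ((2*M) ^ a * Real.exp (-(lam * (2*M+1)))) := by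
    have h1 : (1/2:ℝ) ^ a * (2*M) ^ a = M ^ a := by
      rw [← Real.mul_rpow (by norm_num) h2M.le, show (1/2 * (2*M) : ℝ) = M by ring]
    have h2 : Real.exp (lam * (2*M+1)) * Real.exp (-(lam * (2*M+1))) = 1 := by
      rw [← Real.exp_add]; simp
    calc M ^ (a+1) = M ^ a * M := Real.rpow_add_one (ne_of_gt hM0) a
    _ = M * (((1/2:ℝ)^a * (2*M)^a) * (Real.exp (lam*(2*M+1)) * Real.exp (-(lam*(2*M+1))))) := by
        rw [h1, h2]; ring
    _ = S * ((2*M) ^ a * Real.exp (-(lam * (2*M+1)))) := by rw [hSdef]; ring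
  have hAS : A ≤ S * G lam a := by
    calc A ≤ M ^ (a+1) := hAle
    _ = S * ((2*M) ^ a * Real.exp (-(lam*(2*M+1)))) := hid
    _ ≤ S * G lam a := mul_le_mul_of_nonneg_left hG2 hS0
  have hEA : E * A ≤ A := mul_le_of_le_one_left hA0 hE1
  have hJ1' : E * G lam a - E * A ≤ J lam c a := by
    have hG' : G lam a - A = ∫ s in Ioi M, g s := by rw [hGsplit]; ring
    rw [← mul_sub, hG']; exact hJtail
  have final : (E - S) * G lam a ≤ J lam c a := by
    rw [sub_mul]; linarith
  exact final

lemma core (hlam : 0 < lam) (hc : 0 ≤ c) :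
    Tendsto (fun a : ℝ => J lam c a / G lam a) atTop (𝓝 1) := by
  rw [Metric.tendsto_atTop]
  intro ε hε
  have h1 : Tendsto (fun M : ℝ => Real.exp (-(c / M))) atTop (𝓝 1) := by
    have h0 : Tendsto (fun M : ℝ => -(c / M)) atTop (𝓝 0) := by
      have h := (tendsto_inv_atTop_zero (𝕜 := ℝ)).const_mul c
      simpa [div_eq_mul_inv, neg_zero] using h.neg
    have := Real.continuous_exp.continuousAt.tendsto.comp h0
    simpa [Function.comp_def] using this
  obtain ⟨M, hMa⟩ := ((h1.eventually (eventually_gt_nhds (by linarith : (1:ℝ) - ε/2 < 1))).and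
    (eventually_ge_atTop (1:ℝ))).exists
  obtain ⟨hM1, hM2⟩ := hMa
  have h2 : Tendsto (fun a : ℝ => M * Real.exp (lam * (2*M+1)) * (1/2:ℝ) ^ a) atTop (𝓝 0) := by
    have hb := tendsto_rpow_atTop_of_base_lt_one (1/2 : ℝ) (by norm_num) (by norm_num)
    simpa using hb.const_mul (M * Real.exp (lam * (2*M+1)))
  obtain ⟨N, hN⟩ := eventually_atTop.1
    ((h2.eventually (eventually_lt_nhds (by linarith : (0:ℝ) < ε/2))).and (eventually_ge_atTop (0:ℝ)))
  refine ⟨N, fun a haN => ?_⟩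
  obtain ⟨hS, ha0⟩ := hN a haN
  have hG := posG hlam (a := a) ha0
  have hlow : Real.exp (-(c / M)) - M * Real.exp (lam * (2 * M + 1)) * (1 / 2 : ℝ) ^ a
      ≤ J lam c a / G lam a :=
    (le_div_iff₀ hG).2 (JG_lower hlam hc hM2 ha0)
  have hup : J lam c a / G lam a ≤ 1 := (div_le_one hG).2 (J_le_G hlam hc ha0)
  rw [Real.dist_eq, abs_lt]
  constructor <;> [linarith; linarith]


lemma ratio_simp {mu K F P q J1 J2 L : ℝ} (hmu : mu ≠ 0) (hK : K ≠ 0) (hF : F ≠ 0)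
    (hP : P ≠ 0) (hq : q ≠ 0) (hJ2 : J2 ≠ 0) (hL : L ≠ 0) :
    (mu * P / (F * K) * J1) / (mu * (P * L) / ((q * F) * K) * J2) = q / L * (J1 / J2) := by
  field_simp

lemma ratio_simp2 {q L B' a1 Ja Ja1 Ga Ga1 : ℝ} (hq : q ≠ 0) (hL : L ≠ 0) (hB : B' ≠ 0)
    (hJa1 : Ja1 ≠ 0) (hGa : Ga ≠ 0) (hGa1 : Ga1 ≠ 0) (hrec : L * Ga1 = a1 * Ga) :
    q / (L * B') * (Ja / Ja1) * B' * a1 / q = Ja / Ga / (Ja1 / Ga1) := by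
  field_simp
  linear_combination (-Ja) * hrec

end GenRatioAux

/-- The steady-state generation-`k` density in the normalized distance
`z = |x|√(λ/D)` from the origin:
`𝒜_k(z) = (μ(λB)^k/(k!(4πD)^{n/2})) ∫₀^∞ s^{k−n/2} exp(−λs − z²/(4λs)) ds`. -/
noncomputable def steadyDensity (n : ℕ) (lam D B mu : ℝ) (k : ℕ) (z : ℝ) : ℝ :=
  (mu * (lam * B) ^ k / ((Nat.factorial k : ℝ) * (4 * π * D) ^ ((n : ℝ) / 2))) *
    ∫ s in Set.Ioi (0:ℝ),
      s ^ ((k : ℝ) - (n : ℝ) / 2) * Real.exp (-lam * s - z ^ 2 / (4 * lam * s))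

/-- The consecutive-generation ratio `γ_k(z) = 𝒜_k(z)/𝒜_{k+1}(z)`. -/
noncomputable def genRatio (n : ℕ) (lam D B mu : ℝ) (k : ℕ) (z : ℝ) : ℝ :=
  steadyDensity n lam D B mu k z / steadyDensity n lam D B mu (k + 1) z

/-- Small-size self-similarity: for fixed `z > 0`,
`γ_k(z) B (k − n/2 + 1)/(k + 1) → 1` as `k → ∞`, i.e.
`γ_k(z) ∼ (1/B)(1 + n/(2ν))` with `ν = k − n/2 + 1`; in particular
`γ_k(z) → 1/B`. -/
theorem genRatio_large_generation
    (n : ℕ) (hn : 1 ≤ n) (lam D B mu : ℝ)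
    (hlam : 0 < lam) (hD : 0 < D) (hB : 0 < B) (hmu : 0 < mu)
    (z : ℝ) (hz : 0 < z) :
    Filter.Tendsto
      (fun k : ℕ => genRatio n lam D B mu k z * B *
        ((k : ℝ) - (n : ℝ) / 2 + 1) / ((k : ℝ) + 1))
      atTop (nhds 1) ∧
    Filter.Tendsto (fun k : ℕ => genRatio n lam D B mu k z) atTop (nhds (1 / B)) := by
  have hc : (0:ℝ) ≤ z^2/(4*lam) := by positivity
  set c : ℝ := z^2/(4*lam) with hcdef
  have hJeq : ∀ a : ℝ,
      (∫ s in Set.Ioi (0:ℝ), s ^ a * Real.exp (-lam * s - z ^ 2 / (4 * lam * s)))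
        = GenRatioAux.J lam c a := by
    intro a
    rw [GenRatioAux.J]
    simp_rw [hcdef, div_div]
  have t1 : Tendsto (fun k : ℕ => (k:ℝ) - (n:ℝ)/2) atTop atTop :=
    (tendsto_atTop_add_const_right atTop (-((n:ℝ)/2)) tendsto_natCast_atTop_atTop).congr
      (fun k => by ring)
  have t2 : Tendsto (fun k : ℕ => (k:ℝ) - (n:ℝ)/2 + 1) atTop atTop :=
    tendsto_atTop_add_const_right atTop 1 t1
  have hR1 := (GenRatioAux.core hlam hc).comp t1
  have hR2 := (GenRatioAux.core hlam hc).comp t2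
  have hE : Tendsto (fun k : ℕ =>
      (GenRatioAux.J lam c ((k:ℝ) - (n:ℝ)/2) / GenRatioAux.G lam ((k:ℝ) - (n:ℝ)/2)) /
      (GenRatioAux.J lam c ((k:ℝ) - (n:ℝ)/2 + 1) / GenRatioAux.G lam ((k:ℝ) - (n:ℝ)/2 + 1)))
      atTop (𝓝 1) := by
    have h := hR1.div hR2 one_ne_zero
    rw [div_one] at h; exact h
  have hKpos : (0:ℝ) < (4 * π * D) ^ ((n:ℝ)/2) :=
    Real.rpow_pos_of_pos (by have := Real.pi_pos; positivity) _
  have heq : ∀ᶠ k : ℕ in atTop,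
      genRatio n lam D B mu k z * B * ((k:ℝ) - (n:ℝ)/2 + 1) / ((k:ℝ) + 1)
        = (GenRatioAux.J lam c ((k:ℝ) - (n:ℝ)/2) / GenRatioAux.G lam ((k:ℝ) - (n:ℝ)/2)) /
          (GenRatioAux.J lam c ((k:ℝ) - (n:ℝ)/2 + 1) /
            GenRatioAux.G lam ((k:ℝ) - (n:ℝ)/2 + 1)) := by
    filter_upwards [eventually_ge_atTop n] with k hk
    have hn0 : (0:ℝ) ≤ n := Nat.cast_nonneg n
    have hkn : (n:ℝ) ≤ k := Nat.cast_le.2 hk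
    have ha : (0:ℝ) ≤ (k:ℝ) - (n:ℝ)/2 := by linarith
    have ha1 : (0:ℝ) ≤ (k:ℝ) - (n:ℝ)/2 + 1 := by linarith
    have hJa := GenRatioAux.posJ hlam hc ha
    have hJa1 := GenRatioAux.posJ hlam hc ha1
    have hGa := GenRatioAux.posG hlam ha
    have hGa1 := GenRatioAux.posG hlam ha1
    have hrec := GenRatioAux.G_rec hlam ha
    have hcast : ((k+1:ℕ):ℝ) - (n:ℝ)/2 = (k:ℝ) - (n:ℝ)/2 + 1 := by push_cast; ring
    have hfact : ((Nat.factorial (k+1) : ℕ) : ℝ) = ((k:ℝ)+1) * ((Nat.factorial k : ℕ) : ℝ) := by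
      rw [Nat.factorial_succ]; push_cast; ring
    have hfk : ((Nat.factorial k : ℕ) : ℝ) ≠ 0 := by
      exact_mod_cast (Nat.factorial_ne_zero k)
    have hk1 : ((k:ℝ)+1) ≠ 0 := by positivity
    have hstep1 : genRatio n lam D B mu k z
        = (((k:ℝ)+1) / (lam * B)) *
          (GenRatioAux.J lam c ((k:ℝ) - (n:ℝ)/2) / GenRatioAux.J lam c ((k:ℝ) - (n:ℝ)/2 + 1)) := by
      rw [genRatio, steadyDensity, steadyDensity, hJeq, hJeq, hcast, hfact, pow_succ]
      exact GenRatioAux.ratio_simp hmu.ne' hKpos.ne' hfk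
        (pow_ne_zero _ (mul_ne_zero hlam.ne' hB.ne')) hk1 hJa1.ne'
        (mul_ne_zero hlam.ne' hB.ne')
    rw [hstep1]
    exact GenRatioAux.ratio_simp2 hk1 hlam.ne' hB.ne' hJa1.ne' hGa.ne' hGa1.ne' hrec
  have L1 : Tendsto
      (fun k : ℕ => genRatio n lam D B mu k z * B *
        ((k : ℝ) - (n : ℝ) / 2 + 1) / ((k : ℝ) + 1)) atTop (𝓝 1) :=
    hE.congr' (heq.mono fun k hk => hk.symm)
  refine ⟨L1, ?_⟩
  have hinv : Tendsto (fun k : ℕ => ((k:ℝ) - (n:ℝ)/2 + 1)⁻¹) atTop (𝓝 0) :=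
    tendsto_inv_atTop_zero.comp t2
  have hquot : Tendsto (fun k : ℕ => ((k:ℝ)+1) / ((k:ℝ) - (n:ℝ)/2 + 1)) atTop (𝓝 1) := by
    have h := (tendsto_const_nhds (x := (1:ℝ)) (f := atTop (α := ℕ))).add
      (hinv.const_mul ((n:ℝ)/2))
    rw [show (1:ℝ) + (n:ℝ)/2 * 0 = 1 by ring] at h
    refine h.congr' ?_
    filter_upwards [eventually_ge_atTop n] with k hk
    have hkn : (n:ℝ) ≤ k := Nat.cast_le.2 hk
    have hg : ((k:ℝ) - (n:ℝ)/2 + 1) ≠ 0 := ne_of_gt (by linarith)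
    rw [eq_div_iff hg, add_mul, one_mul, mul_assoc, inv_mul_cancel₀ hg, mul_one]
    ring
  have hfinal := L1.mul (hquot.mul (tendsto_const_nhds (x := 1/B) (f := atTop (α := ℕ))))
  rw [show (1:ℝ) * (1 * (1/B)) = 1/B by ring] at hfinal
  refine hfinal.congr' ?_
  filter_upwards [eventually_ge_atTop n] with k hk
  have hkn : (n:ℝ) ≤ k := Nat.cast_le.2 hk
  have hn0 : (0:ℝ) ≤ n := Nat.cast_nonneg n
  have hg : ((k:ℝ) - (n:ℝ)/2 + 1) ≠ 0 := ne_of_gt (by linarith)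
  have hk1 : ((k:ℝ)+1) ≠ 0 := by positivity
  have h2 : (((k:ℝ) - (n:ℝ)/2 + 1) / ((k:ℝ)+1)) * (((k:ℝ)+1) / ((k:ℝ) - (n:ℝ)/2 + 1)) = 1 := by
    rw [div_mul_div_comm, mul_comm ((k:ℝ)+1) ((k:ℝ) - (n:ℝ)/2 + 1)]
    exact div_self (mul_ne_zero hg hk1)
  have h3 : genRatio n lam D B mu k z * B * ((k:ℝ) - (n:ℝ)/2 + 1) / ((k:ℝ)+1) *
      (((k:ℝ)+1) / ((k:ℝ) - (n:ℝ)/2 + 1) * (1/B))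
      = genRatio n lam D B mu k z * ((B * (1/B)) *
        ((((k:ℝ) - (n:ℝ)/2 + 1) / ((k:ℝ)+1)) * (((k:ℝ)+1) / ((k:ℝ) - (n:ℝ)/2 + 1)))) := by
    ring
  rw [h3, mul_one_div_cancel hB.ne', h2]
  norm_num
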